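/- With A, D, π, M, B as in the context, define linear maps f, g_L, g_R : Hom_k(M ⊗ D ⊗ A, B) → Hom_k(M ⊗ A, B) by f(ψ)(m ⊗ a) = ψ(m ⊗ π(a₍₁₎) ⊗ a₍₂₎), g_L(ψ)(m ⊗ a) = θ_B(d ↦ ψ(m ⊗ d ⊗ a)), and g_R(ψ)(m ⊗ a) = θ_B(d ↦ ψ(m₍₀₎ ⊗ π(m₍₁₎)d ⊗ a)); set K_L = range(f − g_L) and K_R = range(f − g_R). Define α, β : Hom_k(M ⊗ A, B) → Hom_k(M ⊗ A, B) by α(φ)(m ⊗ a) = φ(m₍₀₎ ⊗ S(m₍₁₎)a) and β(ψ)(m ⊗ a) = ψ(m₍₀₎ ⊗ m₍₁₎a). Then α(K_L) ⊆ K_R and β(K_R) ⊆ K_L; consequently, since α and β are mutually inverse, α induces a linear isomorphism Hom_k(M ⊗ A, B)/K_L ≅ Hom_k(M ⊗ A, B)/K_R. -/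

import Mathlib

/-!
STATEMENT 8: With a Hopf algebra morphism π : A → D, a right A-comodule M and a left
D-contramodule (B, θ_B): for the two coequalizer presentations with maps
f(ψ)(m⊗a) = ψ(m ⊗ π(a₍₁₎) ⊗ a₍₂₎), g_L(ψ)(m⊗a) = θ_B(d ↦ ψ(m ⊗ d ⊗ a)),
g_R(ψ)(m⊗a) = θ_B(d ↦ ψ(m₍₀₎ ⊗ π(m₍₁₎)d ⊗ a)), with K_L = range(f − g_L),
K_R = range(f − g_R), the maps α(φ)(m⊗a) = φ(m₍₀₎ ⊗ S(m₍₁₎)a) and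
β(ψ)(m⊗a) = ψ(m₍₀₎ ⊗ m₍₁₎a) satisfy α(K_L) ⊆ K_R and β(K_R) ⊆ K_L, and α induces a
linear isomorphism of the quotients.
-/

open TensorProduct LinearMap

noncomputable section

section FrozenDefs
variable (k : Type*) [Field k]
variable (A : Type*) [Semiring A] [HopfAlgebra k A]
variable (D : Type*) [Semiring D] [HopfAlgebra k D]
variable (M : Type*) [AddCommGroup M] [Module k M]
variable (B : Type*) [AddCommGroup B] [Module k B]

def IsComodule {M : Type*} [AddCommGroup M] [Module k M]
    (ρ : M →ₗ[k] M ⊗[k] A) : Prop :=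
  ((TensorProduct.assoc k M A A).toLinearMap ∘ₗ (TensorProduct.map ρ LinearMap.id) ∘ₗ ρ
      = (TensorProduct.map LinearMap.id Coalgebra.comul) ∘ₗ ρ) ∧
  ((TensorProduct.rid k M).toLinearMap ∘ₗ
      (TensorProduct.map LinearMap.id Coalgebra.counit) ∘ₗ ρ = LinearMap.id)

def IsContramodule {B : Type*} [AddCommGroup B] [Module k B]
    (θ : (D →ₗ[k] B) →ₗ[k] B) : Prop :=
  (∀ Φ : D →ₗ[k] (D →ₗ[k] B),
      θ (θ ∘ₗ Φ) = θ ((TensorProduct.lift Φ.flip) ∘ₗ Coalgebra.comul)) ∧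
  (∀ b : B, θ ((LinearMap.toSpanSingleton k B b) ∘ₗ Coalgebra.counit) = b)

/-- `m ⊗ a ↦ m ⊗ (π(a₍₁₎) ⊗ a₍₂₎)`. -/
def tauF (π : A →ₗ[k] D) : (M ⊗[k] A) →ₗ[k] (M ⊗[k] (D ⊗[k] A)) :=
  TensorProduct.map LinearMap.id
    ((TensorProduct.map π LinearMap.id) ∘ₗ (Coalgebra.comul (R := k) (A := A)))

/-- `f(ψ)(m ⊗ a) = ψ(m ⊗ π(a₍₁₎) ⊗ a₍₂₎)`. -/
def fMap (π : A →ₗ[k] D) :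
    ((M ⊗[k] (D ⊗[k] A)) →ₗ[k] B) →ₗ[k] ((M ⊗[k] A) →ₗ[k] B) :=
  LinearMap.lcomp k B (tauF k A D M π)

/-- `g_L(ψ)(m ⊗ a) = θ_B(d ↦ ψ(m ⊗ d ⊗ a))`. -/
def gLMap (θB : (D →ₗ[k] B) →ₗ[k] B) :
    ((M ⊗[k] (D ⊗[k] A)) →ₗ[k] B) →ₗ[k] ((M ⊗[k] A) →ₗ[k] B) :=
  (LinearMap.llcomp k (M ⊗[k] A) (D →ₗ[k] B) B θB) ∘ₗ
  (TensorProduct.uncurry (RingHom.id k) M A (D →ₗ[k] B)) ∘ₗ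
  (LinearMap.llcomp k M ((D ⊗[k] A) →ₗ[k] B) (A →ₗ[k] (D →ₗ[k] B))
      (LinearMap.lflip.toLinearMap ∘ₗ TensorProduct.lcurry (RingHom.id k) D A B)) ∘ₗ
  (TensorProduct.lcurry (RingHom.id k) M (D ⊗[k] A) B)

/-- `m ⊗ (d ⊗ a) ↦ m₍₀₎ ⊗ (π(m₍₁₎)d ⊗ a)`. -/
def tauR (π : A →ₗ[k] D) (ρ : M →ₗ[k] M ⊗[k] A) :
    (M ⊗[k] (D ⊗[k] A)) →ₗ[k] (M ⊗[k] (D ⊗[k] A)) :=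
  (TensorProduct.map LinearMap.id
      ((TensorProduct.map (LinearMap.mul' k D) LinearMap.id) ∘ₗ
        (TensorProduct.assoc k D D A).symm.toLinearMap ∘ₗ
        (TensorProduct.map π LinearMap.id))) ∘ₗ
  (TensorProduct.assoc k M A (D ⊗[k] A)).toLinearMap ∘ₗ
  (TensorProduct.map ρ LinearMap.id)

/-- `g_R(ψ)(m ⊗ a) = θ_B(d ↦ ψ(m₍₀₎ ⊗ π(m₍₁₎)d ⊗ a))`. -/
def gRMap (π : A →ₗ[k] D) (ρ : M →ₗ[k] M ⊗[k] A) (θB : (D →ₗ[k] B) →ₗ[k] B) :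
    ((M ⊗[k] (D ⊗[k] A)) →ₗ[k] B) →ₗ[k] ((M ⊗[k] A) →ₗ[k] B) :=
  (gLMap k A D M B θB) ∘ₗ (LinearMap.lcomp k B (tauR k A D M π ρ))

/-- `α(φ)(m ⊗ a) = φ(m₍₀₎ ⊗ S(m₍₁₎)a)`. -/
def alphaMap (ρ : M →ₗ[k] M ⊗[k] A) :
    ((M ⊗[k] A) →ₗ[k] B) →ₗ[k] ((M ⊗[k] A) →ₗ[k] B) :=
  LinearMap.lcomp k B
    ((TensorProduct.map LinearMap.id
        ((LinearMap.mul' k A) ∘ₗ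
          (TensorProduct.map (HopfAlgebra.antipode (R := k)) LinearMap.id))) ∘ₗ
      (TensorProduct.assoc k M A A).toLinearMap ∘ₗ (TensorProduct.map ρ LinearMap.id))

/-- `β(ψ)(m ⊗ a) = ψ(m₍₀₎ ⊗ m₍₁₎a)`. -/
def betaMap (ρ : M →ₗ[k] M ⊗[k] A) :
    ((M ⊗[k] A) →ₗ[k] B) →ₗ[k] ((M ⊗[k] A) →ₗ[k] B) :=
  LinearMap.lcomp k B
    ((TensorProduct.map LinearMap.id (LinearMap.mul' k A)) ∘ₗ
      (TensorProduct.assoc k M A A).toLinearMap ∘ₗ (TensorProduct.map ρ LinearMap.id))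


end FrozenDefs

section EFrame
variable {k : Type*} [Field k]
variable {A : Type*} [Semiring A] [HopfAlgebra k A]
variable {M : Type*} [AddCommGroup M] [Module k M]

/-- `E g : m ⊗ x ↦ m₍₀₎ ⊗ g(m₍₁₎ ⊗ x)` (for a generic "coaction" `f`). -/
def Emap (f : M →ₗ[k] M ⊗[k] A) {X Y : Type*} [AddCommMonoid X] [Module k X]
    [AddCommMonoid Y] [Module k Y] (g : A ⊗[k] X →ₗ[k] Y) : M ⊗[k] X →ₗ[k] M ⊗[k] Y :=
  TensorProduct.map LinearMap.id g ∘ₗ (TensorProduct.assoc k M A X).toLinearMap ∘ₗ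
    TensorProduct.map f LinearMap.id

variable (f : M →ₗ[k] M ⊗[k] A)
variable {X Y Z : Type*} [AddCommMonoid X] [Module k X] [AddCommMonoid Y] [Module k Y]
  [AddCommMonoid Z] [Module k Z]

lemma Emap_lfuse (g : A ⊗[k] X →ₗ[k] Y) (h : Y →ₗ[k] Z) :
    TensorProduct.map LinearMap.id h ∘ₗ Emap f g = Emap f (h ∘ₗ g) := by
  unfold Emap
  rw [← comp_assoc (f := (TensorProduct.assoc k M A X).toLinearMap ∘ₗ TensorProduct.map f LinearMap.id),
    ← comp_assoc (f := TensorProduct.map f LinearMap.id)]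
  rw [← TensorProduct.map_comp, LinearMap.id_comp]
  rw [comp_assoc]

lemma Emap_rfuse (g : A ⊗[k] X →ₗ[k] Y) (e : Z →ₗ[k] X) :
    Emap f g ∘ₗ TensorProduct.map LinearMap.id e
      = Emap f (g ∘ₗ TensorProduct.map LinearMap.id e) := by
  unfold Emap
  have h1 : TensorProduct.map f (LinearMap.id (M := X)) ∘ₗ
      TensorProduct.map (LinearMap.id (M := M)) e
      = TensorProduct.map (LinearMap.id (M := M ⊗[k] A)) e ∘ₗ
        TensorProduct.map f (LinearMap.id (M := Z)) := by
    rw [← TensorProduct.map_comp, ← TensorProduct.map_comp]; simp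
  have h2 : (TensorProduct.assoc k M A X).toLinearMap ∘ₗ
      TensorProduct.map (LinearMap.id (M := M ⊗[k] A)) e
      = TensorProduct.map LinearMap.id (TensorProduct.map LinearMap.id e) ∘ₗ
        (TensorProduct.assoc k M A Z).toLinearMap := by
    apply TensorProduct.ext_threefold; intro x y z; simp
  calc (TensorProduct.map LinearMap.id g ∘ₗ (TensorProduct.assoc k M A X).toLinearMap ∘ₗ
          TensorProduct.map f LinearMap.id) ∘ₗ TensorProduct.map LinearMap.id e
      = TensorProduct.map LinearMap.id g ∘ₗ (TensorProduct.assoc k M A X).toLinearMap ∘ₗ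
          TensorProduct.map (LinearMap.id (M := M ⊗[k] A)) e ∘ₗ
          TensorProduct.map f (LinearMap.id (M := Z)) := by
        simp only [comp_assoc, h1]
    _ = TensorProduct.map LinearMap.id g ∘ₗ
          (TensorProduct.map LinearMap.id (TensorProduct.map LinearMap.id e) ∘ₗ
            (TensorProduct.assoc k M A Z).toLinearMap) ∘ₗ
          TensorProduct.map f (LinearMap.id (M := Z)) := by
        rw [← comp_assoc (TensorProduct.map f LinearMap.id), h2, comp_assoc]
    _ = TensorProduct.map LinearMap.id (g ∘ₗ TensorProduct.map LinearMap.id e) ∘ₗ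
          (TensorProduct.assoc k M A Z).toLinearMap ∘ₗ
          TensorProduct.map f (LinearMap.id (M := Z)) := by
        simp only [← comp_assoc]
        rw [← TensorProduct.map_comp, LinearMap.id_comp]


lemma Emap_comp (hf : (TensorProduct.assoc k M A A).toLinearMap ∘ₗ
      TensorProduct.map f LinearMap.id ∘ₗ f
      = TensorProduct.map LinearMap.id Coalgebra.comul ∘ₗ f)
    (g : A ⊗[k] X →ₗ[k] Y) (g' : A ⊗[k] Y →ₗ[k] Z) :
    Emap f g' ∘ₗ Emap f g
      = Emap f (g' ∘ₗ TensorProduct.map LinearMap.id g ∘ₗ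
          (TensorProduct.assoc k A A X).toLinearMap ∘ₗ
          TensorProduct.map Coalgebra.comul LinearMap.id) := by
  have step2 : TensorProduct.map f (LinearMap.id (M := Y)) ∘ₗ
      TensorProduct.map (LinearMap.id (M := M)) g
      = TensorProduct.map (LinearMap.id (M := M ⊗[k] A)) g ∘ₗ
        TensorProduct.map f (LinearMap.id (M := A ⊗[k] X)) := by
    rw [← TensorProduct.map_comp, ← TensorProduct.map_comp]; simp
  have step3 : (TensorProduct.assoc k M A Y).toLinearMap ∘ₗ
      TensorProduct.map (LinearMap.id (M := M ⊗[k] A)) g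
      = TensorProduct.map LinearMap.id (TensorProduct.map LinearMap.id g) ∘ₗ
        (TensorProduct.assoc k M A (A ⊗[k] X)).toLinearMap := by
    apply TensorProduct.ext_threefold; intro x y z; simp
  have step4 : TensorProduct.map f (LinearMap.id (M := A ⊗[k] X)) ∘ₗ
      (TensorProduct.assoc k M A X).toLinearMap
      = (TensorProduct.assoc k (M ⊗[k] A) A X).toLinearMap ∘ₗ
        TensorProduct.map (TensorProduct.map f LinearMap.id) LinearMap.id := by
    apply TensorProduct.ext_threefold; intro x y z; simp
  have pent : (TensorProduct.assoc k M A (A ⊗[k] X)).toLinearMap ∘ₗ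
      (TensorProduct.assoc k (M ⊗[k] A) A X).toLinearMap
      = TensorProduct.map LinearMap.id (TensorProduct.assoc k A A X).toLinearMap ∘ₗ
        (TensorProduct.assoc k M (A ⊗[k] A) X).toLinearMap ∘ₗ
        TensorProduct.map (TensorProduct.assoc k M A A).toLinearMap LinearMap.id := by
    apply TensorProduct.ext_threefold; intro x y z
    induction x using TensorProduct.induction_on with
    | zero => simp
    | tmul m a => simp
    | add u v hu hv => simp_all [add_tmul]
  have step7 : TensorProduct.map (TensorProduct.assoc k M A A).toLinearMap
        (LinearMap.id (M := X)) ∘ₗ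
      TensorProduct.map (TensorProduct.map f LinearMap.id) LinearMap.id ∘ₗ
      TensorProduct.map f LinearMap.id
      = TensorProduct.map (TensorProduct.map (LinearMap.id (M := M)) Coalgebra.comul)
          LinearMap.id ∘ₗ TensorProduct.map f LinearMap.id := by
    rw [← TensorProduct.map_comp, ← TensorProduct.map_comp, ← TensorProduct.map_comp, hf]
    simp
  have step8 : (TensorProduct.assoc k M (A ⊗[k] A) X).toLinearMap ∘ₗ
      TensorProduct.map (TensorProduct.map (LinearMap.id (M := M)) Coalgebra.comul)
        LinearMap.id
      = TensorProduct.map LinearMap.id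
          (TensorProduct.map Coalgebra.comul LinearMap.id) ∘ₗ
        (TensorProduct.assoc k M A X).toLinearMap := by
    apply TensorProduct.ext_threefold; intro x y z; simp
  unfold Emap
  calc (TensorProduct.map LinearMap.id g' ∘ₗ (TensorProduct.assoc k M A Y).toLinearMap ∘ₗ
          TensorProduct.map f LinearMap.id) ∘ₗ
        TensorProduct.map LinearMap.id g ∘ₗ (TensorProduct.assoc k M A X).toLinearMap ∘ₗ
          TensorProduct.map f LinearMap.id
      = TensorProduct.map LinearMap.id g' ∘ₗ (TensorProduct.assoc k M A Y).toLinearMap ∘ₗ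
          (TensorProduct.map f LinearMap.id ∘ₗ TensorProduct.map LinearMap.id g) ∘ₗ
          (TensorProduct.assoc k M A X).toLinearMap ∘ₗ TensorProduct.map f LinearMap.id := by
        simp only [comp_assoc]
    _ = TensorProduct.map LinearMap.id g' ∘ₗ
          ((TensorProduct.assoc k M A Y).toLinearMap ∘ₗ
            TensorProduct.map (LinearMap.id (M := M ⊗[k] A)) g) ∘ₗ
          (TensorProduct.map f (LinearMap.id (M := A ⊗[k] X)) ∘ₗ
            (TensorProduct.assoc k M A X).toLinearMap) ∘ₗ
          TensorProduct.map f LinearMap.id := by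
        rw [step2]; simp only [comp_assoc]
    _ = TensorProduct.map LinearMap.id g' ∘ₗ
          TensorProduct.map LinearMap.id (TensorProduct.map LinearMap.id g) ∘ₗ
          ((TensorProduct.assoc k M A (A ⊗[k] X)).toLinearMap ∘ₗ
            (TensorProduct.assoc k (M ⊗[k] A) A X).toLinearMap) ∘ₗ
          TensorProduct.map (TensorProduct.map f LinearMap.id) LinearMap.id ∘ₗ
          TensorProduct.map f LinearMap.id := by
        rw [step3, step4]; simp only [comp_assoc]
    _ = TensorProduct.map LinearMap.id g' ∘ₗ
          TensorProduct.map LinearMap.id (TensorProduct.map LinearMap.id g) ∘ₗ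
          TensorProduct.map LinearMap.id (TensorProduct.assoc k A A X).toLinearMap ∘ₗ
          (TensorProduct.assoc k M (A ⊗[k] A) X).toLinearMap ∘ₗ
          (TensorProduct.map (TensorProduct.assoc k M A A).toLinearMap LinearMap.id ∘ₗ
            TensorProduct.map (TensorProduct.map f LinearMap.id) LinearMap.id ∘ₗ
            TensorProduct.map f LinearMap.id) := by
        rw [pent]; simp only [comp_assoc]
    _ = TensorProduct.map LinearMap.id g' ∘ₗ
          TensorProduct.map LinearMap.id (TensorProduct.map LinearMap.id g) ∘ₗ
          TensorProduct.map LinearMap.id (TensorProduct.assoc k A A X).toLinearMap ∘ₗ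
          ((TensorProduct.assoc k M (A ⊗[k] A) X).toLinearMap ∘ₗ
            TensorProduct.map (TensorProduct.map (LinearMap.id (M := M)) Coalgebra.comul)
              LinearMap.id) ∘ₗ
          TensorProduct.map f LinearMap.id := by
        rw [step7]; simp only [comp_assoc]
    _ = (TensorProduct.map LinearMap.id g' ∘ₗ
          TensorProduct.map LinearMap.id (TensorProduct.map LinearMap.id g) ∘ₗ
          TensorProduct.map LinearMap.id (TensorProduct.assoc k A A X).toLinearMap ∘ₗ
          TensorProduct.map LinearMap.id
            (TensorProduct.map Coalgebra.comul LinearMap.id)) ∘ₗ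
          (TensorProduct.assoc k M A X).toLinearMap ∘ₗ
          TensorProduct.map f LinearMap.id := by
        rw [step8]; simp only [comp_assoc]
    _ = TensorProduct.map LinearMap.id (g' ∘ₗ TensorProduct.map LinearMap.id g ∘ₗ
          (TensorProduct.assoc k A A X).toLinearMap ∘ₗ
          TensorProduct.map Coalgebra.comul LinearMap.id) ∘ₗ
          (TensorProduct.assoc k M A X).toLinearMap ∘ₗ
          TensorProduct.map f LinearMap.id := by
        congr 1
        simp only [← TensorProduct.map_comp, LinearMap.id_comp]

/-- the counit collapse: `E (ε ⊗ •) = id`. -/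
lemma Emap_counit
    (hf2 : (TensorProduct.rid k M).toLinearMap ∘ₗ
        TensorProduct.map LinearMap.id Coalgebra.counit ∘ₗ f = LinearMap.id) :
    Emap f ((TensorProduct.lid k X).toLinearMap ∘ₗ
        TensorProduct.map Coalgebra.counit LinearMap.id) = LinearMap.id := by
  have key : TensorProduct.map (LinearMap.id (M := M))
        ((TensorProduct.lid k X).toLinearMap ∘ₗ
          TensorProduct.map Coalgebra.counit LinearMap.id) ∘ₗ
      (TensorProduct.assoc k M A X).toLinearMap
      = TensorProduct.map ((TensorProduct.rid k M).toLinearMap ∘ₗ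
          TensorProduct.map LinearMap.id Coalgebra.counit) LinearMap.id := by
    apply TensorProduct.ext_threefold; intro x y z
    simp [TensorProduct.smul_tmul]
  unfold Emap
  rw [← comp_assoc, key, ← TensorProduct.map_comp, comp_assoc, hf2]
  simp


lemma Emap_conj {W : Type*} [AddCommMonoid W] [Module k W] (g : A ⊗[k] X →ₗ[k] Y) :
    Emap f (lTensor W g ∘ₗ (TensorProduct.leftComm k A W X).toLinearMap)
      = (TensorProduct.leftComm k M W Y).symm.toLinearMap ∘ₗ
        lTensor W (Emap f g) ∘ₗ (TensorProduct.leftComm k M W X).toLinearMap := by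
  apply TensorProduct.ext'
  intro m z
  induction z using TensorProduct.induction_on with
  | zero => simp
  | add u v hu hv => simp_all [tmul_add]
  | tmul w x =>
    simp only [Emap, comp_apply, TensorProduct.map_tmul, LinearMap.id_coe, id_eq,
      LinearEquiv.coe_coe, TensorProduct.leftComm_tmul, lTensor_tmul]
    generalize f m = z
    induction z using TensorProduct.induction_on with
    | zero => simp
    | add u v hu hv =>
      rw [add_tmul, map_add, map_add, add_tmul, map_add, map_add, tmul_add, map_add, hu, hv]
    | tmul n b =>
      simp [TensorProduct.leftComm_tmul, TensorProduct.leftComm_symm_tmul]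

end EFrame

variable {k : Type*} [Field k]
variable {A : Type*} [Semiring A] [HopfAlgebra k A]
variable {D : Type*} [Semiring D] [HopfAlgebra k D]

/-- `Δπ : A → D⊗A`, `x ↦ π(x₁) ⊗ x₂`. -/
def dpi (π : A →ₐc[k] D) : A →ₗ[k] D ⊗[k] A :=
  TensorProduct.map (π : A →ₗ[k] D) LinearMap.id ∘ₗ Coalgebra.comul

/-- `x ↦ π x ⊗ 1`. -/
def ipi (π : A →ₐc[k] D) : A →ₗ[k] D ⊗[k] A :=
  (TensorProduct.mk k D A).flip 1 ∘ₗ (π : A →ₗ[k] D)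

/-- `x ↦ 1 ⊗ S x`. -/
def jS : A →ₗ[k] D ⊗[k] A :=
  TensorProduct.mk k D A 1 ∘ₗ HopfAlgebra.antipode (R := k)

/-- `x ↦ 1 ⊗ x`. -/
def jId : A →ₗ[k] D ⊗[k] A := TensorProduct.mk k D A 1

/-- convolution product on `Hom(A, D⊗A)`. -/
def conv (f g : A →ₗ[k] D ⊗[k] A) : A →ₗ[k] D ⊗[k] A :=
  LinearMap.mul' k (D ⊗[k] A) ∘ₗ TensorProduct.map f g ∘ₗ Coalgebra.comul

/-- convolution unit. -/
def convUnit : A →ₗ[k] D ⊗[k] A :=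
  Algebra.linearMap k (D ⊗[k] A) ∘ₗ Coalgebra.counit

/-- `Δπ` as an algebra hom. -/
def dpiAlg (π : A →ₐc[k] D) : A →ₐ[k] D ⊗[k] A :=
  (Algebra.TensorProduct.map (π : A →ₐ[k] D) (AlgHom.id k A)).comp (Bialgebra.comulAlgHom k A)

lemma dpiAlg_toLinearMap (π : A →ₐc[k] D) : (dpiAlg π).toLinearMap = dpi π := by
  have h : (Algebra.TensorProduct.map (π : A →ₐ[k] D) (AlgHom.id k A)).toLinearMap
      = TensorProduct.map (π : A →ₗ[k] D) LinearMap.id := by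
    apply TensorProduct.ext'
    intro x y
    simp
  ext x
  simpa [dpiAlg, dpi] using congr($(h) (Coalgebra.comul x))

lemma dpi_mul (π : A →ₐc[k] D) :
    LinearMap.mul' k (D ⊗[k] A) ∘ₗ TensorProduct.map (dpi π) (dpi π)
      = dpi π ∘ₗ LinearMap.mul' k A := by
  apply TensorProduct.ext'
  intro x y
  have := map_mul (dpiAlg π) x y
  simp only [← dpiAlg_toLinearMap]
  simp only [coe_comp, Function.comp_apply, map_tmul, mul'_apply, AlgHom.toLinearMap_apply]
  exact this.symm

lemma dpi_one (π : A →ₐc[k] D) :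
    dpi π ∘ₗ Algebra.linearMap k A = Algebra.linearMap k (D ⊗[k] A) := by
  ext
  simp only [← dpiAlg_toLinearMap, coe_comp, Function.comp_apply, Algebra.linearMap_apply,
    map_one, AlgHom.toLinearMap_apply, Algebra.TensorProduct.one_def]

section Conv
open Coalgebra
variable {k : Type*} [Field k]
variable {A : Type*} [Semiring A] [HopfAlgebra k A]
variable {D : Type*} [Semiring D] [HopfAlgebra k D]

lemma conv_repr (f g : A →ₗ[k] D ⊗[k] A) (x : A) {ι : Type*} (r : Coalgebra.Repr k x ι) :
    conv f g x = ∑ i ∈ r.index, f (r.left i) * g (r.right i) := by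
  simp only [conv, comp_apply, ← r.eq, map_sum, TensorProduct.map_tmul, mul'_apply]

lemma conv_assoc (f g h : A →ₗ[k] D ⊗[k] A) :
    conv (conv f g) h = conv f (conv g h) := by
  apply LinearMap.ext; intro x
  classical
  set r := ℛ k x with hr
  have key := Coalgebra.sum_map_tmul_tmul_eq (R := k) (f := f) (g := g) (h := h) (a := x)
    (repr := r) (a₁ := fun i => ℛ k (r.left i)) (a₂ := fun i => ℛ k (r.right i))
  apply_fun (LinearMap.mul' k (D ⊗[k] A) ∘ₗ
      lTensor (D ⊗[k] A) (LinearMap.mul' k (D ⊗[k] A))) at key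
  simp only [map_sum, comp_apply, lTensor_tmul, mul'_apply] at key
  have L : conv (conv f g) h x = ∑ i ∈ r.index, ∑ j ∈ (ℛ k (r.left i)).index,
      f ((ℛ k (r.left i)).left j) * g ((ℛ k (r.left i)).right j) * h (r.right i) := by
    rw [conv_repr _ _ x r]
    refine Finset.sum_congr rfl fun i _ => ?_
    rw [conv_repr f g _ (ℛ k (r.left i)), Finset.sum_mul]
  have R : conv f (conv g h) x = ∑ i ∈ r.index, ∑ j ∈ (ℛ k (r.right i)).index,
      f (r.left i) * (g ((ℛ k (r.right i)).left j) * h ((ℛ k (r.right i)).right j)) := by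
    rw [conv_repr _ _ x r]
    refine Finset.sum_congr rfl fun i _ => ?_
    rw [conv_repr g h _ (ℛ k (r.right i)), Finset.mul_sum]
  rw [L, R]
  simp only [mul_assoc]
  exact key.symm

lemma conv_unit_left (g : A →ₗ[k] D ⊗[k] A) : conv convUnit g = g := by
  apply LinearMap.ext; intro x
  classical
  set r := ℛ k x with hr
  have h0 := congrArg (TensorProduct.lid k A) (Coalgebra.sum_counit_tmul_eq r)
  simp only [map_sum, TensorProduct.lid_tmul, one_smul] at h0
  rw [conv_repr _ _ x r]
  have : ∀ i ∈ r.index, convUnit (r.left i) * g (r.right i)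
      = Coalgebra.counit (R := k) (r.left i) • g (r.right i) := by
    intro i _
    simp [convUnit, Algebra.smul_def]
  rw [Finset.sum_congr rfl this]
  calc ∑ i ∈ r.index, Coalgebra.counit (R := k) (r.left i) • g (r.right i)
      = g (∑ i ∈ r.index, Coalgebra.counit (R := k) (r.left i) • r.right i) := by
        simp [map_sum]
    _ = g x := by rw [h0]

lemma lem2 (π : A →ₐc[k] D) :
    conv (dpi π ∘ₗ HopfAlgebra.antipode (R := k)) (dpi π) = convUnit := by
  apply LinearMap.ext; intro x
  classical
  set r := ℛ k x with hr
  rw [conv_repr _ _ x r]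
  have : ∀ i ∈ r.index,
      (dpi π ∘ₗ HopfAlgebra.antipode (R := k)) (r.left i) * dpi π (r.right i)
      = dpi π (HopfAlgebra.antipode (R := k) (r.left i) * r.right i) := by
    intro i _
    rw [← dpiAlg_toLinearMap]
    simp [map_mul]
  rw [Finset.sum_congr rfl this, ← map_sum, HopfAlgebra.sum_antipode_mul_eq_smul r]
  rw [← dpiAlg_toLinearMap]
  simp only [AlgHom.toLinearMap_apply, map_smul, map_one, convUnit, comp_apply,
    Algebra.linearMap_apply, Algebra.algebraMap_eq_smul_one]

lemma lem0 (π : A →ₐc[k] D) : conv (ipi π) jId = dpi π := by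
  apply LinearMap.ext; intro x
  classical
  set r := ℛ k x with hr
  rw [conv_repr _ _ x r]
  have : ∀ i ∈ r.index, ipi π (r.left i) * jId (r.right i)
      = TensorProduct.map (π : A →ₗ[k] D) LinearMap.id (r.left i ⊗ₜ[k] r.right i) := by
    intro i _
    simp [ipi, jId, Algebra.TensorProduct.tmul_mul_tmul]
  rw [Finset.sum_congr rfl this, ← map_sum, r.eq]
  rfl

lemma lem1 (π : A →ₐc[k] D) : conv (dpi π) jS = ipi π := by
  apply LinearMap.ext; intro x
  classical
  set r := ℛ k x with hr
  have key := Coalgebra.sum_tmul_tmul_eq (R := k) r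
    (fun i => ℛ k (r.left i)) (fun i => ℛ k (r.right i))
  apply_fun (TensorProduct.map (π : A →ₗ[k] D)
      (LinearMap.mul' k A ∘ₗ lTensor A (HopfAlgebra.antipode (R := k)))) at key
  simp only [map_sum, TensorProduct.map_tmul, comp_apply, lTensor_tmul, mul'_apply] at key
  -- key : ∑ i, ∑ j, π (r.left i) ⊗ₜ (a₂.left * S a₂.right)
  --     = ∑ i, ∑ j, π (a₁.left) ⊗ₜ (a₁.right * S (r.right i))
  have L : conv (dpi π) jS x = ∑ i ∈ r.index, ∑ j ∈ (ℛ k (r.left i)).index,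
      (π : A →ₗ[k] D) ((ℛ k (r.left i)).left j) ⊗ₜ[k]
        ((ℛ k (r.left i)).right j * HopfAlgebra.antipode (R := k) (r.right i)) := by
    rw [conv_repr _ _ x r]
    refine Finset.sum_congr rfl fun i _ => ?_
    rw [dpi, comp_apply, ← (ℛ k (r.left i)).eq]
    simp [jS, map_sum, Finset.sum_mul, Algebra.TensorProduct.tmul_mul_tmul]
  have R2 : ∑ i ∈ r.index, ∑ j ∈ (ℛ k (r.right i)).index,
      (π : A →ₗ[k] D) (r.left i) ⊗ₜ[k]
        ((ℛ k (r.right i)).left j * HopfAlgebra.antipode (R := k) ((ℛ k (r.right i)).right j))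
      = ∑ i ∈ r.index, Coalgebra.counit (R := k) (r.right i) •
          ((π : A →ₗ[k] D) (r.left i) ⊗ₜ[k] (1 : A)) := by
    refine Finset.sum_congr rfl fun i _ => ?_
    rw [← TensorProduct.tmul_sum, HopfAlgebra.sum_mul_antipode_eq_smul (ℛ k (r.right i))]
    rw [TensorProduct.tmul_smul]
  have h0 := congrArg (TensorProduct.rid k A) (Coalgebra.sum_tmul_counit_eq r)
  simp only [map_sum, TensorProduct.rid_tmul, one_smul] at h0
  rw [L, key, R2]
  calc ∑ i ∈ r.index, Coalgebra.counit (R := k) (r.right i) •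
        ((π : A →ₗ[k] D) (r.left i) ⊗ₜ[k] (1 : A))
      = ipi π (∑ i ∈ r.index, Coalgebra.counit (R := k) (r.right i) • r.left i) := by
        simp [ipi, map_sum]
    _ = ipi π x := by rw [h0]

lemma lem3 (π : A →ₐc[k] D) :
    conv (dpi π ∘ₗ HopfAlgebra.antipode (R := k)) (ipi π) = jS := by
  rw [← lem1 π, ← conv_assoc, lem2 π, conv_unit_left]

end Conv

section ALevel
open Coalgebra
variable {k : Type*} [Field k]
variable {A : Type*} [Semiring A] [HopfAlgebra k A]
variable {D : Type*} [Semiring D] [HopfAlgebra k D]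

/-- `x ⊗ y ↦ S(x)y`. -/
def hSm : A ⊗[k] A →ₗ[k] A :=
  LinearMap.mul' k A ∘ₗ TensorProduct.map (HopfAlgebra.antipode (R := k)) LinearMap.id

/-- `x ⊗ w ↦ Δπ(S x) * w`. -/
def gTm (π : A →ₐc[k] D) : A ⊗[k] (D ⊗[k] A) →ₗ[k] D ⊗[k] A :=
  LinearMap.mul' k (D ⊗[k] A) ∘ₗ
    TensorProduct.map (dpi π ∘ₗ HopfAlgebra.antipode (R := k)) LinearMap.id

/-- `x ⊗ w ↦ Δπ(x) * w`. -/
def gTm' (π : A →ₐc[k] D) : A ⊗[k] (D ⊗[k] A) →ₗ[k] D ⊗[k] A :=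
  LinearMap.mul' k (D ⊗[k] A) ∘ₗ TensorProduct.map (dpi π) LinearMap.id

/-- the inner map of `tauR`. -/
def gRm (π : A →ₐc[k] D) : A ⊗[k] (D ⊗[k] A) →ₗ[k] D ⊗[k] A :=
  (TensorProduct.map (LinearMap.mul' k D) LinearMap.id) ∘ₗ
    (TensorProduct.assoc k D D A).symm.toLinearMap ∘ₗ
    (TensorProduct.map (π : A →ₗ[k] D) LinearMap.id)

lemma gRm_apply (π : A →ₐc[k] D) (y : A) (w : D ⊗[k] A) :
    gRm π (y ⊗ₜ[k] w) = ipi π y * w := by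
  induction w using TensorProduct.induction_on with
  | zero => rw [TensorProduct.tmul_zero, map_zero, mul_zero]
  | add u v hu hv => rw [TensorProduct.tmul_add, map_add, hu, hv, mul_add]
  | tmul d a =>
    simp [gRm, ipi, Algebra.TensorProduct.tmul_mul_tmul]

lemma gTm_apply (π : A →ₐc[k] D) (y : A) (w : D ⊗[k] A) :
    gTm π (y ⊗ₜ[k] w) = dpi π (HopfAlgebra.antipode (R := k) y) * w := by
  simp [gTm]

lemma gTm'_apply (π : A →ₐc[k] D) (y : A) (w : D ⊗[k] A) :
    gTm' π (y ⊗ₜ[k] w) = dpi π y * w := by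
  simp [gTm']

lemma hShat_apply (y : A) (w : D ⊗[k] A) :
    (lTensor D (hSm (k := k) (A := A)) ∘ₗ (TensorProduct.leftComm k A D A).toLinearMap)
        (y ⊗ₜ[k] w) = jS y * w := by
  induction w using TensorProduct.induction_on with
  | zero => rw [TensorProduct.tmul_zero, map_zero, mul_zero]
  | add u v hu hv => rw [TensorProduct.tmul_add, map_add, hu, hv, mul_add]
  | tmul d a =>
    simp [hSm, jS, TensorProduct.leftComm_tmul, Algebra.TensorProduct.tmul_mul_tmul]

lemma muhat_apply (y : A) (w : D ⊗[k] A) :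
    (lTensor D (LinearMap.mul' k A) ∘ₗ (TensorProduct.leftComm k A D A).toLinearMap)
        (y ⊗ₜ[k] w) = jId (D := D) y * w := by
  induction w using TensorProduct.induction_on with
  | zero => rw [TensorProduct.tmul_zero, map_zero, mul_zero]
  | add u v hu hv => rw [TensorProduct.tmul_add, map_add, hu, hv, mul_add]
  | tmul d a =>
    simp [jId, TensorProduct.leftComm_tmul, Algebra.TensorProduct.tmul_mul_tmul]

lemma comb_apply {X Y Z : Type*} [AddCommMonoid X] [Module k X] [AddCommMonoid Y] [Module k Y]
    [AddCommMonoid Z] [Module k Z]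
    (g : A ⊗[k] X →ₗ[k] Y) (g' : A ⊗[k] Y →ₗ[k] Z) (x : A) (w : X) {ι : Type*} (r : Coalgebra.Repr k x ι) :
    (g' ∘ₗ TensorProduct.map LinearMap.id g ∘ₗ (TensorProduct.assoc k A A X).toLinearMap ∘ₗ
        TensorProduct.map Coalgebra.comul LinearMap.id) (x ⊗ₜ[k] w)
      = ∑ i ∈ r.index, g' (r.left i ⊗ₜ[k] g (r.right i ⊗ₜ[k] w)) := by
  simp only [comp_apply, TensorProduct.map_tmul, LinearMap.id_coe, id_eq, ← r.eq,
    TensorProduct.sum_tmul, map_sum, LinearEquiv.coe_coe, TensorProduct.assoc_tmul]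

/-- `(A⊗X →ₗ X)`-version of the counit-collapse map. -/
def cXm (X : Type*) [AddCommMonoid X] [Module k X] : A ⊗[k] X →ₗ[k] X :=
  (TensorProduct.lid k X).toLinearMap ∘ₗ TensorProduct.map Coalgebra.counit LinearMap.id

lemma AL1 : hSm ∘ₗ TensorProduct.map LinearMap.id (LinearMap.mul' k A) ∘ₗ
      (TensorProduct.assoc k A A A).toLinearMap ∘ₗ
      TensorProduct.map Coalgebra.comul LinearMap.id = cXm (k := k) A := by
  apply TensorProduct.ext'
  intro x a
  classical
  rw [comb_apply _ _ x a (ℛ k x)]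
  simp only [hSm, comp_apply, TensorProduct.map_tmul, LinearMap.id_coe, id_eq, mul'_apply]
  rw [Finset.sum_congr rfl (fun i _ => (mul_assoc _ _ _).symm), ← Finset.sum_mul,
    HopfAlgebra.sum_antipode_mul_eq_smul (ℛ k x)]
  simp [cXm, smul_mul_assoc]

lemma AL2 : LinearMap.mul' k A ∘ₗ TensorProduct.map LinearMap.id (hSm (k := k) (A := A)) ∘ₗ
      (TensorProduct.assoc k A A A).toLinearMap ∘ₗ
      TensorProduct.map Coalgebra.comul LinearMap.id = cXm (k := k) A := by
  apply TensorProduct.ext'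
  intro x a
  classical
  rw [comb_apply _ _ x a (ℛ k x)]
  simp only [hSm, comp_apply, TensorProduct.map_tmul, LinearMap.id_coe, id_eq, mul'_apply]
  rw [Finset.sum_congr rfl (fun i _ => (mul_assoc _ _ _).symm), ← Finset.sum_mul,
    HopfAlgebra.sum_mul_antipode_eq_smul (ℛ k x)]
  simp [cXm, smul_mul_assoc]

lemma AL3 (π : A →ₐc[k] D) :
    gTm π ∘ₗ TensorProduct.map LinearMap.id (dpi π) = dpi π ∘ₗ hSm := by
  apply TensorProduct.ext'
  intro x y
  simp only [comp_apply, TensorProduct.map_tmul, LinearMap.id_coe, id_eq, gTm_apply, hSm,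
    mul'_apply]
  rw [← dpiAlg_toLinearMap]
  simp [map_mul]

lemma AL3' (π : A →ₐc[k] D) :
    gTm' π ∘ₗ TensorProduct.map LinearMap.id (dpi π) = dpi π ∘ₗ LinearMap.mul' k A := by
  apply TensorProduct.ext'
  intro x y
  simp only [comp_apply, TensorProduct.map_tmul, LinearMap.id_coe, id_eq, gTm'_apply,
    mul'_apply]
  rw [← dpiAlg_toLinearMap]
  simp [map_mul]

lemma AL4 (π : A →ₐc[k] D) :
    gTm π ∘ₗ TensorProduct.map LinearMap.id (gRm π) ∘ₗ
        (TensorProduct.assoc k A A (D ⊗[k] A)).toLinearMap ∘ₗ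
        TensorProduct.map Coalgebra.comul LinearMap.id
      = lTensor D (hSm (k := k) (A := A)) ∘ₗ (TensorProduct.leftComm k A D A).toLinearMap := by
  apply TensorProduct.ext'
  intro x w
  classical
  rw [comb_apply _ _ x w (ℛ k x)]
  have : ∀ i ∈ (ℛ k x).index,
      gTm π ((ℛ k x).left i ⊗ₜ[k] gRm π ((ℛ k x).right i ⊗ₜ[k] w))
      = ((dpi π ∘ₗ HopfAlgebra.antipode (R := k)) ((ℛ k x).left i) * ipi π ((ℛ k x).right i)) * w := by
    intro i _
    rw [gRm_apply, gTm_apply, mul_assoc]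
    rfl
  rw [Finset.sum_congr rfl this, ← Finset.sum_mul, ← conv_repr _ _ x (ℛ k x), lem3 π,
    hShat_apply]

lemma AL4' (π : A →ₐc[k] D) :
    gRm π ∘ₗ TensorProduct.map LinearMap.id
        (lTensor D (LinearMap.mul' k A) ∘ₗ (TensorProduct.leftComm k A D A).toLinearMap) ∘ₗ
        (TensorProduct.assoc k A A (D ⊗[k] A)).toLinearMap ∘ₗ
        TensorProduct.map Coalgebra.comul LinearMap.id
      = gTm' π := by
  apply TensorProduct.ext'
  intro x w
  classical
  rw [comb_apply _ _ x w (ℛ k x)]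
  have : ∀ i ∈ (ℛ k x).index,
      gRm π ((ℛ k x).left i ⊗ₜ[k]
          (lTensor D (LinearMap.mul' k A) ∘ₗ (TensorProduct.leftComm k A D A).toLinearMap)
            ((ℛ k x).right i ⊗ₜ[k] w))
      = (ipi π ((ℛ k x).left i) * jId ((ℛ k x).right i)) * w := by
    intro i _
    rw [muhat_apply, gRm_apply, mul_assoc]
  rw [Finset.sum_congr rfl this, ← Finset.sum_mul, ← conv_repr _ _ x (ℛ k x), lem0 π,
    gTm'_apply]

end ALevel

section JIdent
variable {k : Type*} [Field k]
variable {A : Type*} [Semiring A] [HopfAlgebra k A]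
variable {D : Type*} [Semiring D] [HopfAlgebra k D]
variable {M : Type*} [AddCommGroup M] [Module k M]
variable (π : A →ₐc[k] D) (ρ : M →ₗ[k] M ⊗[k] A)

lemma J1 (h1 : (TensorProduct.assoc k M A A).toLinearMap ∘ₗ
      (TensorProduct.map ρ LinearMap.id) ∘ₗ ρ
      = (TensorProduct.map LinearMap.id Coalgebra.comul) ∘ₗ ρ)
    (h2 : (TensorProduct.rid k M).toLinearMap ∘ₗ
      (TensorProduct.map LinearMap.id Coalgebra.counit) ∘ₗ ρ = LinearMap.id) :
    Emap ρ (hSm (k := k) (A := A)) ∘ₗ Emap ρ (LinearMap.mul' k A) = LinearMap.id := by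
  rw [Emap_comp ρ h1, AL1]
  exact Emap_counit ρ h2

lemma J2 (h1 : (TensorProduct.assoc k M A A).toLinearMap ∘ₗ
      (TensorProduct.map ρ LinearMap.id) ∘ₗ ρ
      = (TensorProduct.map LinearMap.id Coalgebra.comul) ∘ₗ ρ)
    (h2 : (TensorProduct.rid k M).toLinearMap ∘ₗ
      (TensorProduct.map LinearMap.id Coalgebra.counit) ∘ₗ ρ = LinearMap.id) :
    Emap ρ (LinearMap.mul' k A) ∘ₗ Emap ρ (hSm (k := k) (A := A)) = LinearMap.id := by
  rw [Emap_comp ρ h1, AL2]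
  exact Emap_counit ρ h2

lemma J3 : Emap ρ (gTm π) ∘ₗ TensorProduct.map LinearMap.id (dpi π)
    = TensorProduct.map LinearMap.id (dpi π) ∘ₗ Emap ρ hSm := by
  rw [Emap_rfuse, Emap_lfuse, AL3]

lemma J3' : Emap ρ (gTm' π) ∘ₗ TensorProduct.map LinearMap.id (dpi π)
    = TensorProduct.map LinearMap.id (dpi π) ∘ₗ Emap ρ (LinearMap.mul' k A) := by
  rw [Emap_rfuse, Emap_lfuse, AL3']

lemma J4 (h1 : (TensorProduct.assoc k M A A).toLinearMap ∘ₗ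
      (TensorProduct.map ρ LinearMap.id) ∘ₗ ρ
      = (TensorProduct.map LinearMap.id Coalgebra.comul) ∘ₗ ρ) :
    Emap ρ (gTm π) ∘ₗ Emap ρ (gRm π)
      = (TensorProduct.leftComm k M D A).symm.toLinearMap ∘ₗ
        lTensor D (Emap ρ hSm) ∘ₗ (TensorProduct.leftComm k M D A).toLinearMap := by
  rw [Emap_comp ρ h1, AL4]
  exact Emap_conj ρ hSm

lemma J4' (h1 : (TensorProduct.assoc k M A A).toLinearMap ∘ₗ
      (TensorProduct.map ρ LinearMap.id) ∘ₗ ρ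
      = (TensorProduct.map LinearMap.id Coalgebra.comul) ∘ₗ ρ) :
    Emap ρ (gRm π) ∘ₗ
        ((TensorProduct.leftComm k M D A).symm.toLinearMap ∘ₗ
          lTensor D (Emap ρ (LinearMap.mul' k A)) ∘ₗ
          (TensorProduct.leftComm k M D A).toLinearMap)
      = Emap ρ (gTm' π) := by
  rw [← Emap_conj ρ (LinearMap.mul' k A), Emap_comp ρ h1, AL4']

end JIdent

end

noncomputable section

variable (k : Type*) [Field k]
variable (A : Type*) [Semiring A] [HopfAlgebra k A]
variable (D : Type*) [Semiring D] [HopfAlgebra k D]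
variable (M : Type*) [AddCommGroup M] [Module k M]
variable (B : Type*) [AddCommGroup B] [Module k B]


section HomLevelAux
variable {k A D M B}

/-- the "uncurried to `D`" part of `gLMap`. -/
def Umap : ((M ⊗[k] (D ⊗[k] A)) →ₗ[k] B) →ₗ[k] ((M ⊗[k] A) →ₗ[k] (D →ₗ[k] B)) :=
  (TensorProduct.uncurry (RingHom.id k) M A (D →ₗ[k] B)) ∘ₗ
  (LinearMap.llcomp k M ((D ⊗[k] A) →ₗ[k] B) (A →ₗ[k] (D →ₗ[k] B))
      (LinearMap.lflip.toLinearMap ∘ₗ TensorProduct.lcurry (RingHom.id k) D A B)) ∘ₗ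
  (TensorProduct.lcurry (RingHom.id k) M (D ⊗[k] A) B)

lemma gLMap_eq (θB : (D →ₗ[k] B) →ₗ[k] B) (ψ : (M ⊗[k] (D ⊗[k] A)) →ₗ[k] B) :
    gLMap k A D M B θB ψ = θB ∘ₗ Umap ψ := rfl

lemma U_eval (ψ : (M ⊗[k] (D ⊗[k] A)) →ₗ[k] B) (z : M ⊗[k] A) (d : D) :
    Umap ψ z d = ψ ((TensorProduct.leftComm k M D A).symm (d ⊗ₜ[k] z)) := by
  induction z using TensorProduct.induction_on with
  | zero => rw [map_zero, LinearMap.zero_apply, TensorProduct.tmul_zero, map_zero, map_zero]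
  | add u v hu hv =>
      rw [map_add, LinearMap.add_apply, hu, hv, TensorProduct.tmul_add, map_add, map_add]
  | tmul m a =>
      simp [Umap, TensorProduct.leftComm_symm_tmul]

lemma gL_nat (θB : (D →ₗ[k] B) →ₗ[k] B) (ψ : (M ⊗[k] (D ⊗[k] A)) →ₗ[k] B)
    (h : M ⊗[k] A →ₗ[k] M ⊗[k] A) :
    gLMap k A D M B θB (ψ ∘ₗ ((TensorProduct.leftComm k M D A).symm.toLinearMap ∘ₗ
        lTensor D h ∘ₗ (TensorProduct.leftComm k M D A).toLinearMap))
      = gLMap k A D M B θB ψ ∘ₗ h := by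
  have hU : Umap (ψ ∘ₗ ((TensorProduct.leftComm k M D A).symm.toLinearMap ∘ₗ
      lTensor D h ∘ₗ (TensorProduct.leftComm k M D A).toLinearMap)) = Umap ψ ∘ₗ h := by
    apply LinearMap.ext; intro z
    apply LinearMap.ext; intro d
    have hrhs : (Umap ψ ∘ₗ h) z = Umap ψ (h z) := rfl
    rw [U_eval, hrhs, U_eval]
    simp only [LinearMap.comp_apply, LinearEquiv.coe_coe, LinearEquiv.apply_symm_apply,
      lTensor_tmul]
  rw [gLMap_eq, gLMap_eq, hU, LinearMap.comp_assoc]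

end HomLevelAux

theorem alpha_beta_preserve_coequalizer_kernels
    (π : A →ₐc[k] D)
    (ρ : M →ₗ[k] M ⊗[k] A) (hM : IsComodule k A ρ)
    (θB : (D →ₗ[k] B) →ₗ[k] B) (hB : IsContramodule k D θB) :
    (∀ x ∈ LinearMap.range (fMap k A D M B (π : A →ₗ[k] D) - gLMap k A D M B θB),
        alphaMap k A M B ρ x ∈
          LinearMap.range (fMap k A D M B (π : A →ₗ[k] D)
            - gRMap k A D M B (π : A →ₗ[k] D) ρ θB)) ∧
    (∀ y ∈ LinearMap.range (fMap k A D M B (π : A →ₗ[k] D)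
            - gRMap k A D M B (π : A →ₗ[k] D) ρ θB),
        betaMap k A M B ρ y ∈
          LinearMap.range (fMap k A D M B (π : A →ₗ[k] D) - gLMap k A D M B θB)) ∧
    ∃ e : (((M ⊗[k] A) →ₗ[k] B) ⧸
            LinearMap.range (fMap k A D M B (π : A →ₗ[k] D) - gLMap k A D M B θB)) ≃ₗ[k]
          (((M ⊗[k] A) →ₗ[k] B) ⧸
            LinearMap.range (fMap k A D M B (π : A →ₗ[k] D)
              - gRMap k A D M B (π : A →ₗ[k] D) ρ θB)),
      ∀ φ : (M ⊗[k] A) →ₗ[k] B,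
        e (Submodule.Quotient.mk φ) = Submodule.Quotient.mk (alphaMap k A M B ρ φ) := by
  obtain ⟨hc1, hc2⟩ := hM
  have hF : ∀ ψ : (M ⊗[k] (D ⊗[k] A)) →ₗ[k] B,
      fMap k A D M B (π : A →ₗ[k] D) ψ = ψ ∘ₗ TensorProduct.map LinearMap.id (dpi π) := by
    intro ψ; rfl
  have hA : ∀ φ : (M ⊗[k] A) →ₗ[k] B,
      alphaMap k A M B ρ φ = φ ∘ₗ Emap ρ (hSm (k := k) (A := A)) := by
    intro φ; rfl
  have hBt : ∀ φ : (M ⊗[k] A) →ₗ[k] B,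
      betaMap k A M B ρ φ = φ ∘ₗ Emap ρ (LinearMap.mul' k A) := by
    intro φ; rfl
  have hGR : ∀ ψ : (M ⊗[k] (D ⊗[k] A)) →ₗ[k] B,
      gRMap k A D M B (π : A →ₗ[k] D) ρ θB ψ = gLMap k A D M B θB (ψ ∘ₗ Emap ρ (gRm π)) := by
    intro ψ; rfl
  have part1 : ∀ x ∈ LinearMap.range (fMap k A D M B (π : A →ₗ[k] D) - gLMap k A D M B θB),
      alphaMap k A M B ρ x ∈ LinearMap.range (fMap k A D M B (π : A →ₗ[k] D)
        - gRMap k A D M B (π : A →ₗ[k] D) ρ θB) := by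
    rintro x ⟨ψ, rfl⟩
    refine ⟨ψ ∘ₗ Emap ρ (gTm π), ?_⟩
    have e1 : fMap k A D M B (π : A →ₗ[k] D) (ψ ∘ₗ Emap ρ (gTm π))
        = alphaMap k A M B ρ (fMap k A D M B (π : A →ₗ[k] D) ψ) := by
      rw [hF, hF, hA, LinearMap.comp_assoc, LinearMap.comp_assoc, J3]
    have e2 : gRMap k A D M B (π : A →ₗ[k] D) ρ θB (ψ ∘ₗ Emap ρ (gTm π))
        = alphaMap k A M B ρ (gLMap k A D M B θB ψ) := by
      rw [hGR, hA, LinearMap.comp_assoc, J4 π ρ hc1, gL_nat]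
    rw [LinearMap.sub_apply, LinearMap.sub_apply, map_sub, e1, e2]
  have part2 : ∀ y ∈ LinearMap.range (fMap k A D M B (π : A →ₗ[k] D)
        - gRMap k A D M B (π : A →ₗ[k] D) ρ θB),
      betaMap k A M B ρ y ∈ LinearMap.range (fMap k A D M B (π : A →ₗ[k] D)
        - gLMap k A D M B θB) := by
    rintro y ⟨ψ, rfl⟩
    refine ⟨ψ ∘ₗ Emap ρ (gTm' π), ?_⟩
    have e1 : fMap k A D M B (π : A →ₗ[k] D) (ψ ∘ₗ Emap ρ (gTm' π))
        = betaMap k A M B ρ (fMap k A D M B (π : A →ₗ[k] D) ψ) := by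
      rw [hF, hF, hBt, LinearMap.comp_assoc, LinearMap.comp_assoc, J3']
    have e2 : gLMap k A D M B θB (ψ ∘ₗ Emap ρ (gTm' π))
        = betaMap k A M B ρ (gRMap k A D M B (π : A →ₗ[k] D) ρ θB ψ) := by
      rw [hGR, hBt, ← gL_nat, LinearMap.comp_assoc, J4' π ρ hc1]
    rw [LinearMap.sub_apply, LinearMap.sub_apply, map_sub, e1, e2]
  refine ⟨part1, part2, ?_⟩
  have hαle : LinearMap.range (fMap k A D M B (π : A →ₗ[k] D) - gLMap k A D M B θB) ≤
      (LinearMap.range (fMap k A D M B (π : A →ₗ[k] D)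
        - gRMap k A D M B (π : A →ₗ[k] D) ρ θB)).comap (alphaMap k A M B ρ) :=
    fun x hx => part1 x hx
  have hβle : LinearMap.range (fMap k A D M B (π : A →ₗ[k] D)
        - gRMap k A D M B (π : A →ₗ[k] D) ρ θB) ≤
      (LinearMap.range (fMap k A D M B (π : A →ₗ[k] D) - gLMap k A D M B θB)).comap
        (betaMap k A M B ρ) :=
    fun y hy => part2 y hy
  have hab : ∀ ψ : (M ⊗[k] A) →ₗ[k] B,
      alphaMap k A M B ρ (betaMap k A M B ρ ψ) = ψ := by
    intro ψ
    rw [hBt, hA, LinearMap.comp_assoc, J2 ρ hc1 hc2, LinearMap.comp_id]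
  have hba : ∀ ψ : (M ⊗[k] A) →ₗ[k] B,
      betaMap k A M B ρ (alphaMap k A M B ρ ψ) = ψ := by
    intro ψ
    rw [hA, hBt, LinearMap.comp_assoc, J1 ρ hc1 hc2, LinearMap.comp_id]
  refine ⟨LinearEquiv.ofLinear (Submodule.mapQ _ _ _ hαle) (Submodule.mapQ _ _ _ hβle) ?_ ?_, ?_⟩
  · refine Submodule.linearMap_qext _ ?_
    apply LinearMap.ext; intro ψ
    simp only [LinearMap.comp_apply, Submodule.mkQ_apply, Submodule.mapQ_apply,
      LinearMap.id_apply, hab]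
  · refine Submodule.linearMap_qext _ ?_
    apply LinearMap.ext; intro ψ
    simp only [LinearMap.comp_apply, Submodule.mkQ_apply, Submodule.mapQ_apply,
      LinearMap.id_apply, hba]
  · intro φ
    simp only [LinearEquiv.ofLinear_apply, Submodule.mapQ_apply]

end
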